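/- arXiv:1908.05659 — 2 statements merged into one kernel-verified Lean document; each statement's English description precedes it below -/
import Mathlib

section
/- (CVaR dual representation on finite space) For a finite probability space with probabilities q₁,...,q_M all positive and 0 < β < 1, CVaR at level β of a random variable Z equals the maximum of Σₘ Zₘ pₘ over probability vectors p satisfying 0 ≤ pₘ ≤ qₘ/(1-β) for all m and Σₘ pₘ = 1. -/
/-- CVaR dual representation on a finite probability space: for `0 < β < 1`, the CVaR at level
`β` (Rockafellar–Uryasev representation) is the maximum of `∑ₘ Zₘ pₘ` over probability vectors
`p` with `0 ≤ pₘ ≤ qₘ/(1-β)`. -/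
theorem stmt_9 {M : ℕ} (q : Fin M → ℝ) (hq0 : ∀ m, 0 < q m) (hq1 : ∑ m, q m = 1)
    (β : ℝ) (hβ0 : 0 < β) (hβ1 : β < 1) (Z : Fin M → ℝ) :
    IsGreatest
      {v | ∃ p : Fin M → ℝ, (∀ m, 0 ≤ p m ∧ p m ≤ q m / (1 - β)) ∧ (∑ m, p m = 1) ∧
        v = ∑ m, Z m * p m}
      (sInf {v | ∃ τ : ℝ, v = τ + (1 / (1 - β)) * ∑ m, q m * max (Z m - τ) 0}) := by
  classical
  have hβ' : (0:ℝ) < 1 - β := by linarith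
  -- Every feasible value is below every Rockafellar–Uryasev value
  have key : ∀ p : Fin M → ℝ, (∀ m, 0 ≤ p m ∧ p m ≤ q m / (1 - β)) → (∑ m, p m = 1) →
      ∀ τ : ℝ, ∑ m, Z m * p m ≤ τ + (1 / (1 - β)) * ∑ m, q m * max (Z m - τ) 0 := by
    intro p hp hps τ
    have h1 : ∑ m, Z m * p m = τ + ∑ m, (Z m - τ) * p m := by
      have : ∑ m, (Z m - τ) * p m = ∑ m, Z m * p m - τ * ∑ m, p m := by
        rw [Finset.mul_sum, ← Finset.sum_sub_distrib]
        exact Finset.sum_congr rfl fun m _ => by ring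
      rw [this, hps]; ring
    rw [h1]
    have h2 : ∑ m, (Z m - τ) * p m ≤ ∑ m, max (Z m - τ) 0 * (q m / (1 - β)) := by
      apply Finset.sum_le_sum
      intro m _
      calc (Z m - τ) * p m ≤ max (Z m - τ) 0 * p m :=
            mul_le_mul_of_nonneg_right (le_max_left _ _) (hp m).1
        _ ≤ max (Z m - τ) 0 * (q m / (1 - β)) :=
            mul_le_mul_of_nonneg_left (hp m).2 (le_max_right _ _)
    have h3 : ∑ m, max (Z m - τ) 0 * (q m / (1 - β))
        = (1 / (1 - β)) * ∑ m, q m * max (Z m - τ) 0 := by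
      rw [Finset.mul_sum]
      refine Finset.sum_congr rfl fun m _ => ?_
      field_simp
    linarith [h2, h3.symm.le]
  -- M is positive
  have hM : M ≠ 0 := by
    rintro rfl; simp at hq1
  haveI : Nonempty (Fin M) := ⟨⟨0, Nat.pos_of_ne_zero hM⟩⟩
  -- the CDF
  set g : ℝ → ℝ := fun t => ∑ k ∈ Finset.univ.filter (fun k => Z k ≤ t), q k with hg
  -- the quantile
  set T : Finset (Fin M) := Finset.univ.filter (fun m => β ≤ g (Z m)) with hT
  have hTne : T.Nonempty := by
    obtain ⟨m0, _, hm0⟩ := Finset.exists_max_image Finset.univ Z ⟨Classical.arbitrary _, Finset.mem_univ _⟩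
    refine ⟨m0, Finset.mem_filter.2 ⟨Finset.mem_univ _, ?_⟩⟩
    have : Finset.univ.filter (fun k => Z k ≤ Z m0) = Finset.univ := by
      apply Finset.filter_true_of_mem
      intro k _; exact hm0 k (Finset.mem_univ k)
    simp only [hg, this, hq1]
    linarith
  set τ : ℝ := (T.image Z).min' (hTne.image Z) with hτ
  have hτmem : τ ∈ T.image Z := Finset.min'_mem _ _
  obtain ⟨m1, hm1T, hm1⟩ := Finset.mem_image.1 hτmem
  have hgτ : β ≤ g τ := by
    rw [← hm1]; exact (Finset.mem_filter.1 hm1T).2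
  have hτmin : ∀ m ∈ T, τ ≤ Z m := fun m hm =>
    Finset.min'_le _ _ (Finset.mem_image_of_mem Z hm)
  -- the three parts
  set A : Finset (Fin M) := Finset.univ.filter (fun m => τ < Z m) with hA
  set B : Finset (Fin M) := Finset.univ.filter (fun m => Z m = τ) with hB
  set C : Finset (Fin M) := Finset.univ.filter (fun m => Z m < τ) with hC
  set a : ℝ := ∑ m ∈ A, q m with ha
  set b : ℝ := ∑ m ∈ B, q m with hb
  set s : ℝ := ∑ m ∈ C, q m with hs
  -- splitting sums over A, B, C
  have hsplit : ∀ f : Fin M → ℝ, ∑ m, f m = ∑ m ∈ A, f m + (∑ m ∈ B, f m + ∑ m ∈ C, f m) := by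
    intro f
    rw [← Finset.sum_filter_add_sum_filter_not Finset.univ (fun m => τ < Z m) f]
    congr 1
    rw [← Finset.sum_filter_add_sum_filter_not (Finset.univ.filter (fun m => ¬ τ < Z m))
      (fun m => Z m = τ) f]
    congr 1
    · apply Finset.sum_congr _ (fun _ _ => rfl)
      rw [Finset.filter_filter]
      apply Finset.filter_congr
      intro m _
      constructor
      · rintro ⟨_, h⟩; exact h
      · intro h; exact ⟨by simp [h], h⟩
    · apply Finset.sum_congr _ (fun _ _ => rfl)
      rw [Finset.filter_filter]
      apply Finset.filter_congr
      intro m _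
      constructor
      · rintro ⟨h1, h2⟩; exact lt_of_le_of_ne (not_lt.1 h1) h2
      · intro h; exact ⟨not_lt.2 h.le, ne_of_lt h⟩
  have hpartition : a + (b + s) = 1 := by
    rw [ha, hb, hs, ← hsplit q, hq1]
  have hgτbs : g τ = b + s := by
    show (∑ k ∈ Finset.univ.filter (fun k => Z k ≤ τ), q k) = ∑ m ∈ B, q m + ∑ m ∈ C, q m
    rw [← Finset.sum_filter_add_sum_filter_not (Finset.univ.filter (fun k => Z k ≤ τ))
      (fun m => Z m = τ) q]
    congr 1
    · apply Finset.sum_congr _ (fun _ _ => rfl)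
      rw [Finset.filter_filter]
      apply Finset.filter_congr
      intro m _
      constructor
      · rintro ⟨_, h⟩; exact h
      · intro h; exact ⟨le_of_eq h, h⟩
    · apply Finset.sum_congr _ (fun _ _ => rfl)
      rw [Finset.filter_filter]
      apply Finset.filter_congr
      intro m _
      constructor
      · rintro ⟨h1, h2⟩; exact lt_of_le_of_ne h1 h2
      · intro h; exact ⟨h.le, ne_of_lt h⟩
  -- s < β
  have hsβ : s < β := by
    by_contra hcon
    push_neg at hcon
    rcases Finset.eq_empty_or_nonempty C with hCe | hCne
    · rw [hs, hCe, Finset.sum_empty] at hcon; linarith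
    · obtain ⟨m', hm'C, hm'⟩ := Finset.exists_max_image C Z hCne
      have hm'lt : Z m' < τ := (Finset.mem_filter.1 hm'C).2
      have hfe : Finset.univ.filter (fun k => Z k ≤ Z m') = C := by
        apply Finset.filter_congr
        intro k _
        constructor
        · intro h; exact lt_of_le_of_lt h hm'lt
        · intro h; exact hm' k (Finset.mem_filter.2 ⟨Finset.mem_univ _, h⟩)
      have hgm' : g (Z m') = s := by
        show (∑ k ∈ Finset.univ.filter (fun k => Z k ≤ Z m'), q k) = s
        rw [hfe]
      have hm'T : m' ∈ T := Finset.mem_filter.2 ⟨Finset.mem_univ _, by rw [hgm']; exact hcon⟩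
      exact absurd (hτmin m' hm'T) (not_le.2 hm'lt)
  have haβ : a ≤ 1 - β := by
    have := hgτbs ▸ hgτ
    linarith
  have hb0 : 0 < b := by
    have := hgτbs ▸ hgτ
    linarith
  have habβ : 1 - β ≤ a + b := by linarith
  -- the optimal p
  set c : ℝ := (1 - a / (1 - β)) / b with hc
  have hc0 : 0 ≤ c := by
    apply div_nonneg _ hb0.le
    have : a / (1 - β) ≤ 1 := by rw [div_le_one hβ']; linarith
    linarith
  have hc1 : c ≤ 1 / (1 - β) := by
    rw [hc, div_le_div_iff₀ hb0 hβ']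
    have h : (1 - a / (1 - β)) * (1 - β) = (1 - β) - a := by field_simp
    rw [h]; linarith
  set p : Fin M → ℝ := fun m => if τ < Z m then q m / (1 - β)
    else if Z m = τ then c * q m else 0 with hp
  have hfeas : ∀ m, 0 ≤ p m ∧ p m ≤ q m / (1 - β) := by
    intro m
    simp only [hp]
    by_cases h1 : τ < Z m
    · simp only [h1, if_true]
      exact ⟨div_nonneg (hq0 m).le hβ'.le, le_refl _⟩
    · by_cases h2 : Z m = τ
      · rw [if_neg h1, if_pos h2]
        constructor
        · exact mul_nonneg hc0 (hq0 m).le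
        · calc c * q m ≤ (1 / (1 - β)) * q m :=
              mul_le_mul_of_nonneg_right hc1 (hq0 m).le
            _ = q m / (1 - β) := by ring
      · rw [if_neg h1, if_neg h2]
        exact ⟨le_refl _, div_nonneg (hq0 m).le hβ'.le⟩
  -- sums of p over the parts
  have hpA : ∀ m ∈ A, p m = q m / (1 - β) := by
    intro m hm
    have := (Finset.mem_filter.1 hm).2
    simp [hp, this]
  have hpB : ∀ m ∈ B, p m = c * q m := by
    intro m hm
    have h2 := (Finset.mem_filter.1 hm).2
    have h1 : ¬ τ < Z m := by rw [h2]; exact lt_irrefl τ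
    simp [hp, h1, h2]
  have hpC : ∀ m ∈ C, p m = 0 := by
    intro m hm
    have h := (Finset.mem_filter.1 hm).2
    have h1 : ¬ τ < Z m := not_lt.2 h.le
    have h2 : Z m ≠ τ := ne_of_lt h
    simp [hp, h1, h2]
  have hsum1 : ∑ m, p m = 1 := by
    rw [hsplit p, Finset.sum_congr rfl hpA, Finset.sum_congr rfl hpB,
      Finset.sum_congr rfl hpC, Finset.sum_const_zero]
    rw [← Finset.sum_div, ← Finset.mul_sum, ← ha, ← hb, hc]
    field_simp
    ring
  -- value of the objective at p
  have hmaxA : ∑ m, q m * max (Z m - τ) 0 = ∑ m ∈ A, q m * (Z m - τ) := by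
    rw [hsplit (fun m => q m * max (Z m - τ) 0)]
    have hBz : ∀ m ∈ B, q m * max (Z m - τ) 0 = 0 := by
      intro m hm
      have h := (Finset.mem_filter.1 hm).2
      rw [h]; simp
    have hCz : ∀ m ∈ C, q m * max (Z m - τ) 0 = 0 := by
      intro m hm
      have h := (Finset.mem_filter.1 hm).2
      rw [max_eq_right (by linarith : Z m - τ ≤ 0), mul_zero]
    rw [Finset.sum_congr rfl hBz, Finset.sum_congr rfl hCz, Finset.sum_const_zero,
      Finset.sum_const_zero]
    have hAeq : ∀ m ∈ A, q m * max (Z m - τ) 0 = q m * (Z m - τ) := by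
      intro m hm
      have h := (Finset.mem_filter.1 hm).2
      rw [max_eq_left (by linarith : (0:ℝ) ≤ Z m - τ)]
    rw [Finset.sum_congr rfl hAeq]
    ring
  have hval : ∑ m, Z m * p m = τ + (1 / (1 - β)) * ∑ m, q m * max (Z m - τ) 0 := by
    rw [hmaxA, hsplit (fun m => Z m * p m)]
    have hAe : ∀ m ∈ A, Z m * p m = Z m * q m / (1 - β) := by
      intro m hm; rw [hpA m hm]; ring
    have hBe : ∀ m ∈ B, Z m * p m = τ * (c * q m) := by
      intro m hm
      rw [hpB m hm, (Finset.mem_filter.1 hm).2]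
    have hCe : ∀ m ∈ C, Z m * p m = 0 := by
      intro m hm; rw [hpC m hm, mul_zero]
    rw [Finset.sum_congr rfl hAe, Finset.sum_congr rfl hBe, Finset.sum_congr rfl hCe,
      Finset.sum_const_zero, ← Finset.mul_sum, ← Finset.mul_sum, ← hb]
    have hqZ : ∑ m ∈ A, q m * (Z m - τ) = (∑ m ∈ A, Z m * q m) - τ * a := by
      rw [ha, Finset.mul_sum, ← Finset.sum_sub_distrib]
      exact Finset.sum_congr rfl fun m _ => by ring
    rw [hqZ]
    have hsumdiv : ∑ m ∈ A, Z m * q m / (1 - β) = (∑ m ∈ A, Z m * q m) / (1 - β) :=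
      (Finset.sum_div _ _ _).symm
    rw [hsumdiv, hc, div_mul_cancel₀ _ (ne_of_gt hb0)]
    field_simp
    ring
  -- assemble
  constructor
  · refine ⟨p, hfeas, hsum1, ?_⟩
    have hmem : τ + (1 / (1 - β)) * ∑ m, q m * max (Z m - τ) 0 ∈
        {v | ∃ τ : ℝ, v = τ + (1 / (1 - β)) * ∑ m, q m * max (Z m - τ) 0} := ⟨τ, rfl⟩
    have hlb : ∀ v ∈ {v | ∃ τ : ℝ, v = τ + (1 / (1 - β)) * ∑ m, q m * max (Z m - τ) 0},
        ∑ m, Z m * p m ≤ v := by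
      rintro v ⟨τ', rfl⟩
      exact key p hfeas hsum1 τ'
    have : sInf {v | ∃ τ : ℝ, v = τ + (1 / (1 - β)) * ∑ m, q m * max (Z m - τ) 0}
        = ∑ m, Z m * p m := by
      apply le_antisymm
      · rw [hval]
        exact csInf_le ⟨_, hlb⟩ hmem
      · exact le_csInf ⟨_, hmem⟩ hlb
    exact this
  · rintro v ⟨p', hp', hps', rfl⟩
    have hne : {v | ∃ τ : ℝ, v = τ + (1 / (1 - β)) * ∑ m, q m * max (Z m - τ) 0}.Nonempty :=
      ⟨(0:ℝ) + (1 / (1 - β)) * ∑ m, q m * max (Z m - 0) 0, ⟨0, rfl⟩⟩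
    apply le_csInf hne
    rintro w ⟨τ', rfl⟩
    exact key p' hp' hps' τ'
end

section
/- (One-dimensional Wasserstein DRO regularization, simplest case) Let h(x,ξ) = ξ·x for x, ξ ∈ ℝⁿ with the transport cost c(ξ₁,ξ₂) = ‖ξ₁−ξ₂‖_q. Then for any probability measure P₀ on ℝⁿ with finite first moment, sup over all P with 1-Wasserstein distance (induced by ‖·‖_q) at most ε from P₀ of E_P[ξᵀx] = E_{P₀}[ξᵀx] + ε‖x‖_p, where 1/p + 1/q = 1. -/
open MeasureTheory

/-- Wasserstein DRO of a linear cost function: with transport cost `‖·‖_q` and dual exponent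
`p` (`1/p + 1/q = 1`), the worst-case expectation of `ξ ↦ ξᵀx` over the 1-Wasserstein ball of
radius `ε` around `P₀` equals `E_{P₀}[ξᵀx] + ε‖x‖_p`. -/
theorem stmt_16 {n : ℕ} (p q : ℝ) (hq : 1 < q) (hpq : 1 / p + 1 / q = 1)
    (x : Fin n → ℝ) (P₀ : Measure (Fin n → ℝ)) [IsProbabilityMeasure P₀]
    (hmom : Integrable (fun ξ : Fin n → ℝ => (∑ i, |ξ i| ^ q) ^ (1 / q)) P₀)
    (hmom' : ∀ i, Integrable (fun ξ : Fin n → ℝ => ξ i) P₀)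
    (ε : ℝ) (hε : 0 ≤ ε) :
    sSup {v | ∃ P : Measure (Fin n → ℝ), IsProbabilityMeasure P ∧
        (∃ π : Measure ((Fin n → ℝ) × (Fin n → ℝ)), IsProbabilityMeasure π ∧
          π.map Prod.fst = P₀ ∧ π.map Prod.snd = P ∧
          Integrable (fun sp : (Fin n → ℝ) × (Fin n → ℝ) =>
            (∑ i, |sp.1 i - sp.2 i| ^ q) ^ (1 / q)) π ∧
          (∫ sp, (∑ i, |sp.1 i - sp.2 i| ^ q) ^ (1 / q) ∂π) ≤ ε) ∧
        v = ∫ ξ, ∑ i, ξ i * x i ∂P} =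
      (∫ ξ, ∑ i, ξ i * x i ∂P₀) + ε * (∑ i, |x i| ^ p) ^ (1 / p) := by
  classical
  have hq0 : (0:ℝ) < q := zero_lt_one.trans hq
  have hcq : Real.HolderConjugate q p := Real.holderConjugate_iff.mpr ⟨hq, by
    rw [inv_eq_one_div, inv_eq_one_div]; linarith⟩
  have hcp : Real.HolderConjugate p q := hcq.symm
  have hp1 : 1 < p := hcp.lt
  have hp0 : (0:ℝ) < p := hcp.pos
  set f : (Fin n → ℝ) → ℝ := fun ξ => ∑ i, ξ i * x i with hfdef
  set Np : ℝ := (∑ i, |x i| ^ p) ^ (1 / p) with hNpdef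
  have hNp0 : 0 ≤ Np := Real.rpow_nonneg
    (Finset.sum_nonneg fun i _ => Real.rpow_nonneg (abs_nonneg _) _) _
  have hfm : Measurable f := Finset.measurable_sum _ fun i _ =>
    (measurable_pi_apply i).mul_const _
  have hfint : Integrable f P₀ :=
    integrable_finset_sum _ fun i _ => (hmom' i).mul_const _
  have hcostm : Measurable (fun sp : (Fin n → ℝ) × (Fin n → ℝ) =>
      (∑ i, |sp.1 i - sp.2 i| ^ q) ^ (1 / q)) := by
    apply Measurable.pow_const
    exact Finset.measurable_sum _ fun i _ =>
      (((measurable_pi_apply i).comp measurable_fst).sub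
        ((measurable_pi_apply i).comp measurable_snd)).abs.pow_const _
  have hcost_nn : ∀ sp : (Fin n → ℝ) × (Fin n → ℝ),
      0 ≤ (∑ i, |sp.1 i - sp.2 i| ^ q) ^ (1 / q) := fun sp =>
    Real.rpow_nonneg (Finset.sum_nonneg fun i _ => Real.rpow_nonneg (abs_nonneg _) _) _
  -- Hölder's inequality
  have hHolder : ∀ y : Fin n → ℝ, |∑ i, y i * x i| ≤ Np * (∑ i, |y i| ^ q) ^ (1 / q) := by
    intro y
    calc |∑ i, y i * x i| ≤ ∑ i, |y i * x i| := Finset.abs_sum_le_sum_abs _ _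
      _ = ∑ i, |x i| * |y i| := by
          refine Finset.sum_congr rfl fun i _ => ?_; rw [abs_mul, mul_comm]
      _ ≤ (∑ i, |(|x i|)| ^ p) ^ (1/p) * (∑ i, |(|y i|)| ^ q) ^ (1/q) :=
          Real.inner_le_Lp_mul_Lq Finset.univ (fun i => |x i|) (fun i => |y i|) hcp
      _ = Np * (∑ i, |y i| ^ q) ^ (1 / q) := by simp [abs_abs, hNpdef]
  -- a direction achieving the Hölder equality
  obtain ⟨d, hd1, hd2⟩ : ∃ d : Fin n → ℝ, (∑ i, d i * x i) = Np ∧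
      (∑ i, |ε * d i| ^ q) ^ (1/q) ≤ ε := by
    by_cases hx : x = 0
    · refine ⟨0, ?_, ?_⟩
      · simp [hNpdef, hx, Real.zero_rpow hp0.ne',
          Real.zero_rpow (inv_ne_zero hp0.ne')]
      · simp [Real.zero_rpow hq0.ne', Real.zero_rpow (inv_ne_zero hq0.ne'), hε]
    · have hS : 0 < ∑ i, |x i| ^ p := by
        obtain ⟨i, hi⟩ : ∃ i, x i ≠ 0 := by
          by_contra h; push_neg at h; exact hx (funext h)
        exact Finset.sum_pos' (fun j _ => Real.rpow_nonneg (abs_nonneg _) _)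
          ⟨i, Finset.mem_univ i, Real.rpow_pos_of_pos (abs_pos.mpr hi) _⟩
      have hNp : 0 < Np := Real.rpow_pos_of_pos hS _
      have hNpp : Np ^ p = ∑ i, |x i| ^ p := by
        rw [hNpdef, one_div, Real.rpow_inv_rpow hS.le hp0.ne']
      have hNpow : 0 < Np ^ (p - 1) := Real.rpow_pos_of_pos hNp _
      refine ⟨fun i => Real.sign (x i) * |x i| ^ (p-1) / Np ^ (p-1), ?_, ?_⟩
      · have key : ∀ i, Real.sign (x i) * |x i| ^ (p-1) / Np ^ (p-1) * x i
            = |x i| ^ p / Np ^ (p-1) := by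
          intro i
          have hsgn : Real.sign (x i) * x i = |x i| := by
            rcases lt_trichotomy (x i) 0 with h|h|h
            · rw [Real.sign_of_neg h, abs_of_neg h]; ring
            · simp [h]
            · rw [Real.sign_of_pos h, abs_of_pos h]; ring
          have habs : |x i| * |x i| ^ (p-1) = |x i| ^ p := by
            rcases eq_or_ne (x i) 0 with h|h
            · simp [h, Real.zero_rpow hp0.ne',
                Real.zero_rpow (sub_ne_zero.mpr hp1.ne')]
            · rw [show |x i| * |x i| ^ (p-1) = |x i| ^ (1:ℝ) * |x i| ^ (p-1) by
                  rw [Real.rpow_one],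
                ← Real.rpow_add (abs_pos.mpr h)]
              ring_nf
          calc Real.sign (x i) * |x i| ^ (p-1) / Np ^ (p-1) * x i
              = (Real.sign (x i) * x i) * |x i| ^ (p-1) / Np ^ (p-1) := by ring
            _ = |x i| ^ p / Np ^ (p-1) := by rw [hsgn, habs]
        calc (∑ i, Real.sign (x i) * |x i| ^ (p-1) / Np ^ (p-1) * x i)
            = (∑ i, |x i| ^ p) / Np ^ (p-1) := by
              rw [Finset.sum_congr rfl fun i _ => key i, ← Finset.sum_div]
          _ = Np ^ p / Np ^ (p-1) := by rw [hNpp]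
          _ = Np := by rw [← Real.rpow_sub hNp]; norm_num
      · have key2 : ∀ i, |Real.sign (x i) * |x i| ^ (p-1) / Np ^ (p-1)| ^ q
            = |x i| ^ p / Np ^ p := by
          intro i
          rcases eq_or_ne (x i) 0 with h|h
          · simp [h, Real.zero_rpow hq0.ne', Real.zero_rpow hp0.ne',
              Real.zero_rpow (sub_ne_zero.mpr hp1.ne')]
          · have hsgn : |Real.sign (x i)| = 1 := by
              rcases lt_trichotomy (x i) 0 with h'|h'|h'
              · rw [Real.sign_of_neg h']; simp
              · exact absurd h' h
              · rw [Real.sign_of_pos h']; simp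
            rw [abs_div, abs_mul, hsgn, one_mul,
              abs_of_nonneg (Real.rpow_nonneg (abs_nonneg _) _),
              abs_of_nonneg hNpow.le,
              Real.div_rpow (Real.rpow_nonneg (abs_nonneg _) _) hNpow.le,
              ← Real.rpow_mul (abs_nonneg _), ← Real.rpow_mul hNp.le,
              hcp.sub_one_mul_conj]
        have hsum2 : (∑ i, |ε * (Real.sign (x i) * |x i| ^ (p-1) / Np ^ (p-1))| ^ q)
            = ε ^ q := by
          have : ∀ i, |ε * (Real.sign (x i) * |x i| ^ (p-1) / Np ^ (p-1))| ^ q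
              = ε ^ q * (|x i| ^ p / Np ^ p) := by
            intro i
            rw [abs_mul, abs_of_nonneg hε,
              Real.mul_rpow hε (abs_nonneg _), key2 i]
          rw [Finset.sum_congr rfl fun i _ => this i, ← Finset.mul_sum,
            ← Finset.sum_div, ← hNpp, div_self (by positivity : Np ^ p ≠ 0), mul_one]
        rw [hsum2, one_div, Real.rpow_rpow_inv hε hq0.ne']
  -- the optimal transport plan
  set A : (Fin n → ℝ) → (Fin n → ℝ) := fun ξ => ξ + ε • d with hAdef
  have hAm : Measurable A := measurable_id.add_const _
  set T : (Fin n → ℝ) → (Fin n → ℝ) × (Fin n → ℝ) := fun ξ => (ξ, A ξ) with hTdef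
  have hTm : Measurable T := measurable_id.prodMk hAm
  have hπ₀ : IsProbabilityMeasure (P₀.map T) := Measure.isProbabilityMeasure_map hTm.aemeasurable
  have hP : IsProbabilityMeasure (P₀.map A) := Measure.isProbabilityMeasure_map hAm.aemeasurable
  have h1 : (P₀.map T).map Prod.fst = P₀ := by
    rw [Measure.map_map measurable_fst hTm]
    have : Prod.fst ∘ T = id := rfl
    rw [this, Measure.map_id]
  have h2 : (P₀.map T).map Prod.snd = P₀.map A := by
    rw [Measure.map_map measurable_snd hTm]; rfl
  have hcost_comp : ∀ ξ : Fin n → ℝ,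
      (∑ i, |(T ξ).1 i - (T ξ).2 i| ^ q) ^ (1/q) = (∑ i, |ε * d i| ^ q) ^ (1/q) := by
    intro ξ
    congr 1
    refine Finset.sum_congr rfl fun i _ => ?_
    have : (T ξ).1 i - (T ξ).2 i = -(ε * d i) := by
      simp [hTdef, hAdef]
    rw [this, abs_neg]
  have hcost_int : Integrable (fun sp : (Fin n → ℝ) × (Fin n → ℝ) =>
      (∑ i, |sp.1 i - sp.2 i| ^ q) ^ (1 / q)) (P₀.map T) := by
    rw [integrable_map_measure hcostm.aestronglyMeasurable hTm.aemeasurable]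
    exact (integrable_const ((∑ i, |ε * d i| ^ q) ^ (1/q))).congr
      (Filter.Eventually.of_forall fun ξ => (hcost_comp ξ).symm)
  have hcost_val : (∫ sp, (∑ i, |sp.1 i - sp.2 i| ^ q) ^ (1 / q) ∂(P₀.map T)) ≤ ε := by
    rw [integral_map hTm.aemeasurable hcostm.aestronglyMeasurable]
    calc (∫ ξ, (∑ i, |(T ξ).1 i - (T ξ).2 i| ^ q) ^ (1/q) ∂P₀)
        = ∫ _ξ, (∑ i, |ε * d i| ^ q) ^ (1/q) ∂P₀ :=
          integral_congr_ae (Filter.Eventually.of_forall hcost_comp)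
      _ = (∑ i, |ε * d i| ^ q) ^ (1/q) := by simp
      _ ≤ ε := hd2
  have hval : (∫ ξ, f ξ ∂(P₀.map A)) = (∫ ξ, f ξ ∂P₀) + ε * Np := by
    rw [integral_map hAm.aemeasurable hfm.aestronglyMeasurable]
    have hfa : ∀ ξ, f (A ξ) = f ξ + ε * Np := by
      intro ξ
      simp only [hfdef, hAdef, Pi.add_apply, Pi.smul_apply, smul_eq_mul]
      rw [← hd1, Finset.mul_sum, ← Finset.sum_add_distrib]
      exact Finset.sum_congr rfl fun i _ => by ring
    rw [integral_congr_ae (Filter.Eventually.of_forall hfa),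
      integral_add hfint (integrable_const _), integral_const]
    simp
  -- the upper bound
  have hub : ∀ v ∈ {v | ∃ P : Measure (Fin n → ℝ), IsProbabilityMeasure P ∧
        (∃ π : Measure ((Fin n → ℝ) × (Fin n → ℝ)), IsProbabilityMeasure π ∧
          π.map Prod.fst = P₀ ∧ π.map Prod.snd = P ∧
          Integrable (fun sp : (Fin n → ℝ) × (Fin n → ℝ) =>
            (∑ i, |sp.1 i - sp.2 i| ^ q) ^ (1 / q)) π ∧
          (∫ sp, (∑ i, |sp.1 i - sp.2 i| ^ q) ^ (1 / q) ∂π) ≤ ε) ∧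
        v = ∫ ξ, f ξ ∂P}, v ≤ (∫ ξ, f ξ ∂P₀) + ε * Np := by
    rintro v ⟨P, hPP, ⟨π, hππ, k1, k2, kci, kcε⟩, rfl⟩
    have hfst : Integrable (fun sp : (Fin n → ℝ) × (Fin n → ℝ) => f sp.1) π := by
      have : Integrable f (π.map Prod.fst) := k1 ▸ hfint
      exact (integrable_map_measure hfm.aestronglyMeasurable
        measurable_fst.aemeasurable).mp this
    have hgb : ∀ sp : (Fin n → ℝ) × (Fin n → ℝ),
        |f sp.2 - f sp.1| ≤ Np * (∑ i, |sp.1 i - sp.2 i| ^ q) ^ (1/q) := by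
      intro sp
      have h0 : f sp.2 - f sp.1 = ∑ i, (sp.2 i - sp.1 i) * x i := by
        simp only [hfdef]
        rw [← Finset.sum_sub_distrib]
        exact Finset.sum_congr rfl fun i _ => by ring
      have heq : (∑ i, |sp.2 i - sp.1 i| ^ q) = ∑ i, |sp.1 i - sp.2 i| ^ q :=
        Finset.sum_congr rfl fun i _ => by rw [abs_sub_comm]
      rw [h0]
      have := hHolder (fun i => sp.2 i - sp.1 i)
      rwa [heq] at this
    have hgm : Measurable (fun sp : (Fin n → ℝ) × (Fin n → ℝ) => f sp.2 - f sp.1) :=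
      (hfm.comp measurable_snd).sub (hfm.comp measurable_fst)
    have hgi : Integrable (fun sp : (Fin n → ℝ) × (Fin n → ℝ) => f sp.2 - f sp.1) π := by
      refine (kci.const_mul Np).mono hgm.aestronglyMeasurable ?_
      filter_upwards with sp
      rw [Real.norm_eq_abs, Real.norm_eq_abs,
        abs_of_nonneg (mul_nonneg hNp0 (hcost_nn sp))]
      exact hgb sp
    have e1 : (∫ ξ, f ξ ∂P) = ∫ sp, f sp.2 ∂π := by
      rw [← k2, integral_map measurable_snd.aemeasurable hfm.aestronglyMeasurable]
    have e2 : (∫ sp, f sp.1 ∂π) = ∫ ξ, f ξ ∂P₀ := by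
      rw [← k1, integral_map measurable_fst.aemeasurable hfm.aestronglyMeasurable]
    have e3 : (∫ sp, f sp.2 ∂π) = (∫ sp, f sp.1 ∂π) + ∫ sp, (f sp.2 - f sp.1) ∂π := by
      rw [← integral_add hfst hgi]
      exact integral_congr_ae (Filter.Eventually.of_forall fun sp => by ring)
    have e4 : (∫ sp, (f sp.2 - f sp.1) ∂π) ≤ Np * ε := by
      calc (∫ sp, (f sp.2 - f sp.1) ∂π)
          ≤ ∫ sp, Np * (∑ i, |sp.1 i - sp.2 i| ^ q) ^ (1/q) ∂π := by
            refine integral_mono hgi (kci.const_mul Np) fun sp => ?_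
            exact le_trans (le_abs_self _) (hgb sp)
        _ = Np * ∫ sp, (∑ i, |sp.1 i - sp.2 i| ^ q) ^ (1/q) ∂π := integral_const_mul _ _
        _ ≤ Np * ε := mul_le_mul_of_nonneg_left kcε hNp0
    rw [e1, e3, e2]
    linarith [e4]
  refine le_antisymm (csSup_le ?_ hub) (le_csSup ?_ ?_)
  · exact ⟨_, P₀.map A, hP, ⟨P₀.map T, hπ₀, h1, h2, hcost_int, hcost_val⟩, hval.symm⟩
  · exact ⟨_, fun v hv => hub v hv⟩
  · exact ⟨P₀.map A, hP, ⟨P₀.map T, hπ₀, h1, h2, hcost_int, hcost_val⟩, hval.symm⟩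
end
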